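/- Let φ ∈ [0,1) and let f : ℕ → ℝ be such that ∑_{n≥1} |Δ²f(n)| < ∞, so that Δf(n) → ψ ∈ ℝ as n → ∞. If ψ + φ ∉ ℤ and yₙ = e(f(n)) for n ≥ 1, then every solution of the difference equation x_{n+1} = e(−φ)·xₙ + yₙ (n ≥ 1) is bounded, i.e. {e(f(n))}_{n≥1} ∈ 𝕎_φ. -/

import Mathlib

open Filter

/-- `e(x) = e^{2πix}`. -/
noncomputable def e (x : ℝ) : ℂ := Complex.exp (2 * Real.pi * Complex.I * x)

/-- `𝕎_φ`: the set of sequences `{yₙ}` such that every solution of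
`x_{n+1} = e(−φ)xₙ + yₙ` (n ≥ 1) is bounded. -/
def memW (φ : ℝ) (y : ℕ → ℂ) : Prop :=
  ∀ x : ℕ → ℂ, (∀ n, 1 ≤ n → x (n + 1) = e (-φ) * x n + y n) →
    ∃ C : ℝ, ∀ n, 1 ≤ n → ‖x n‖ ≤ C

lemma e_abs (x : ℝ) : ‖e x‖ = 1 := by
  rw [e, Complex.norm_exp]
  simp

lemma e_add (x y : ℝ) : e (x + y) = e x * e y := by
  rw [e, e, e, ← Complex.exp_add]
  congr 1
  push_cast
  ring

lemma e_ne_zero (x : ℝ) : e x ≠ 0 := Complex.exp_ne_zero _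

lemma arg_abs (t : ℝ) : ‖2 * Real.pi * Complex.I * t‖ = 2 * Real.pi * |t| := by
  rw [norm_mul, norm_mul, norm_mul, Complex.norm_I, Complex.norm_real, Complex.norm_real,
    Real.norm_eq_abs, Real.norm_eq_abs, Complex.norm_two, abs_of_pos Real.pi_pos]
  ring

lemma e_sub_one_le (t : ℝ) : ‖e t - 1‖ ≤ 13 * |t| := by
  have hpi1 : Real.pi < 3.15 := Real.pi_lt_d2
  have hpi0 : 0 < Real.pi := Real.pi_pos
  have habs := arg_abs t
  by_cases h : ‖2 * Real.pi * Complex.I * t‖ ≤ 1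
  · have := Complex.norm_exp_sub_one_le h
    rw [habs] at this
    calc ‖e t - 1‖ ≤ 2 * (2 * Real.pi * |t|) := this
      _ ≤ 13 * |t| := by nlinarith [abs_nonneg t]
  · push_neg at h
    rw [habs] at h
    have h2 : ‖e t - 1‖ ≤ 2 := by
      calc ‖e t - 1‖ ≤ ‖e t‖ + ‖(1 : ℂ)‖ :=
        norm_sub_le _ _
      _ = 2 := by rw [e_abs]; norm_num
    calc ‖e t - 1‖ ≤ 2 := h2
      _ ≤ 13 * |t| := by nlinarith [abs_nonneg t]

lemma e_ne_one {θ : ℝ} (h : ∀ m : ℤ, θ ≠ (m : ℝ)) : e θ ≠ 1 := by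
  intro hc
  rw [e, Complex.exp_eq_one_iff] at hc
  obtain ⟨n, hn⟩ := hc
  have hne : (2 * (Real.pi : ℂ) * Complex.I) ≠ 0 := by
    simp [Complex.I_ne_zero, Real.pi_ne_zero]
  have : (θ : ℂ) = (n : ℂ) := by
    apply mul_left_cancel₀ hne
    rw [hn]; ring
  exact h n (by exact_mod_cast this)

lemma e_continuous : Continuous e := by
  apply Complex.continuous_exp.comp
  exact continuous_const.mul Complex.continuous_ofReal

lemma telescope (c : ℕ → ℂ) {M N : ℕ} (h : M ≤ N) :
    ∑ n ∈ Finset.Ico M N, (c (n + 1) - c n) = c N - c M := by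
  induction N, h using Nat.le_induction with
  | base => simp
  | succ N hMN ih =>
    rw [Finset.sum_Ico_succ_top hMN, ih]
    ring

/-- if `∑_{n≥1} |Δ²f(n)| < ∞`, `Δf(n) → ψ`, and `ψ + φ ∉ ℤ`, then
`{e(f(n))}_{n≥1} ∈ 𝕎_φ`. -/
theorem stmt_11 (φ : ℝ) (hφ0 : 0 ≤ φ) (hφ1 : φ < 1) (f : ℕ → ℝ)
    (hsum : Summable fun n : ℕ => |f (n + 1 + 2) - 2 * f (n + 1 + 1) + f (n + 1)|)
    (ψ : ℝ) (hψ : Tendsto (fun n : ℕ => f (n + 1) - f n) atTop (nhds ψ))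
    (hnonint : ∀ m : ℤ, ψ + φ ≠ (m : ℝ)) :
    memW φ (fun n => e (f n)) := by
  intro x hx
  set θ : ℝ := ψ + φ with hθdef
  have heθ : e θ ≠ 1 := e_ne_one hnonint
  set δ : ℝ := ‖e θ - 1‖ / 2 with hδdef
  have hδpos : 0 < δ := by
    have h0 : 0 < ‖e θ - 1‖ := by
      rw [norm_pos_iff]
      exact sub_ne_zero.mpr heθ
    rw [hδdef]; linarith
  set F : ℕ → ℝ := fun m => f (m + 1) with hF
  set d : ℕ → ℝ := fun m => F (m + 1) - F m + φ with hdd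
  set b : ℕ → ℂ := fun m => e (F m + ((m : ℝ) + 2) * φ) with hbdef
  set a : ℕ → ℂ := fun m => (e (d m) - 1)⁻¹ with hadef
  have hbabs : ∀ m, ‖b m‖ = 1 := fun m => e_abs _
  -- d tends to θ
  have hd : Tendsto d atTop (nhds θ) := by
    have h1 : Tendsto (fun m : ℕ => f (m + 1 + 1) - f (m + 1)) atTop (nhds ψ) :=
      hψ.comp (tendsto_add_atTop_nat 1)
    have h2 : Tendsto (fun m : ℕ => f (m + 1 + 1) - f (m + 1) + φ) atTop (nhds (ψ + φ)) :=
      h1.add tendsto_const_nhds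
    exact h2
  -- eventually |e (d m) - 1| ≥ δ
  have hec : Tendsto (fun m => ‖e (d m) - 1‖) atTop
      (nhds (‖e θ - 1‖)) := by
    have hcont : Continuous fun t : ℝ => ‖e t - 1‖ :=
      continuous_norm.comp (e_continuous.sub continuous_const)
    exact (hcont.tendsto θ).comp hd
  have hev : ∀ᶠ m in atTop, δ ≤ ‖e (d m) - 1‖ :=
    hec.eventually_const_le (by rw [hδdef]; linarith)
  obtain ⟨N0, hN0⟩ := eventually_atTop.mp hev
  have hEd_ne : ∀ m, N0 ≤ m → e (d m) - 1 ≠ 0 := by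
    intro m hm hc
    have := hN0 m hm
    rw [hc] at this
    simp at this
    linarith
  have habs_a : ∀ m, N0 ≤ m → ‖a m‖ ≤ δ⁻¹ := by
    intro m hm
    rw [hadef]
    simp only [norm_inv]
    exact inv_anti₀ hδpos (hN0 m hm)
  -- recurrence for b
  have hb_rec : ∀ m, b (m + 1) - b m = b m * (e (d m) - 1) := by
    intro m
    have h1 : b (m + 1) = b m * e (d m) := by
      show e (F (m + 1) + (((m : ℕ) + 1 : ℕ) + 2 : ℝ) * φ)
        = e (F m + ((m : ℝ) + 2) * φ) * e (d m)
      rw [← e_add]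
      congr 1
      rw [hdd]
      push_cast
      ring
    rw [h1]; ring
  have hb_eq : ∀ m, N0 ≤ m → b m = (b (m + 1) - b m) * a m := by
    intro m hm
    rw [hb_rec m, hadef]
    simp only
    rw [mul_assoc, mul_inv_cancel₀ (hEd_ne m hm), mul_one]
  -- second difference of d
  have hDd : ∀ m, d (m + 1) - d m = f (m + 1 + 2) - 2 * f (m + 1 + 1) + f (m + 1) := by
    intro m
    show (F (m + 2) - F (m + 1) + φ) - (F (m + 1) - F m + φ) = _
    rw [hF]
    push_cast
    ring_nf
  -- bound on difference of a
  have ha_diff : ∀ m, N0 ≤ m → ‖a (m + 1) - a m‖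
      ≤ 13 * |f (m + 1 + 2) - 2 * f (m + 1 + 1) + f (m + 1)| / (δ * δ) := by
    intro m hm
    have hne1 : e (d m) - 1 ≠ 0 := hEd_ne m hm
    have hne2 : e (d (m + 1)) - 1 ≠ 0 := hEd_ne (m + 1) (le_trans hm (Nat.le_succ m))
    have key : a (m + 1) - a m = ((e (d m) - 1) - (e (d (m + 1)) - 1)) * (a m * a (m + 1)) := by
      have h1 : (e (d m) - 1) * ((e (d m) - 1)⁻¹ * (e (d (m + 1)) - 1)⁻¹)
          = (e (d (m + 1)) - 1)⁻¹ := by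
        rw [← mul_assoc, mul_inv_cancel₀ hne1, one_mul]
      have h2 : (e (d (m + 1)) - 1) * ((e (d m) - 1)⁻¹ * (e (d (m + 1)) - 1)⁻¹)
          = (e (d m) - 1)⁻¹ := by
        rw [mul_comm ((e (d m) - 1)⁻¹) _, ← mul_assoc, mul_inv_cancel₀ hne2, one_mul]
      simp only [hadef]
      rw [sub_mul, h1, h2]
    have hnum : ‖(e (d m) - 1) - (e (d (m + 1)) - 1)‖
        ≤ 13 * |f (m + 1 + 2) - 2 * f (m + 1 + 1) + f (m + 1)| := by
      have h1 : e (d (m + 1)) = e (d m) * e (d (m + 1) - d m) := by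
        rw [← e_add]; congr 1; ring
      have h2 : (e (d m) - 1) - (e (d (m + 1)) - 1)
          = e (d m) * (1 - e (d (m + 1) - d m)) := by
        rw [h1]; ring
      rw [h2, norm_mul, e_abs, one_mul]
      calc ‖1 - e (d (m + 1) - d m)‖
          = ‖e (d (m + 1) - d m) - 1‖ := norm_sub_rev 1 _
        _ ≤ 13 * |d (m + 1) - d m| := e_sub_one_le _
        _ = 13 * |f (m + 1 + 2) - 2 * f (m + 1 + 1) + f (m + 1)| := by rw [hDd]
    rw [key, norm_mul, norm_mul]
    have hδinv : (0:ℝ) ≤ δ⁻¹ := le_of_lt (inv_pos.mpr hδpos)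
    calc ‖(e (d m) - 1) - (e (d (m + 1)) - 1)‖
          * (‖a m‖ * ‖a (m + 1)‖)
        ≤ (13 * |f (m + 1 + 2) - 2 * f (m + 1 + 1) + f (m + 1)|) * (δ⁻¹ * δ⁻¹) := by
          apply mul_le_mul hnum _ (by positivity) (by positivity)
          exact mul_le_mul (habs_a m hm) (habs_a (m + 1) (le_trans hm (Nat.le_succ m)))
            (by positivity) hδinv
      _ = 13 * |f (m + 1 + 2) - 2 * f (m + 1 + 1) + f (m + 1)| / (δ * δ) := by
          field_simp
  -- the auxiliary sequence u
  set u : ℕ → ℂ := fun m => e (((m : ℝ) + 1) * φ) * x (m + 1) with hudef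
  have hu : ∀ m, u (m + 1) = u m + b m := by
    intro m
    have hrec := hx (m + 1) (Nat.le_add_left 1 m)
    simp only at hrec
    show e ((((m + 1 : ℕ) : ℝ) + 1) * φ) * x (m + 1 + 1)
      = e (((m : ℝ) + 1) * φ) * x (m + 1) + b m
    rw [hrec]
    have h1 : e ((((m + 1 : ℕ) : ℝ) + 1) * φ) * e (-φ) = e (((m : ℝ) + 1) * φ) := by
      rw [← e_add]; congr 1; push_cast; ring
    have h2 : e ((((m + 1 : ℕ) : ℝ) + 1) * φ) * e (f (m + 1)) = b m := by
      rw [← e_add, hbdef]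
      show _ = e (F m + ((m : ℝ) + 2) * φ)
      congr 1
      rw [hF]
      push_cast
      ring
    calc e ((((m + 1 : ℕ) : ℝ) + 1) * φ) * (e (-φ) * x (m + 1) + e (f (m + 1)))
        = (e ((((m + 1 : ℕ) : ℝ) + 1) * φ) * e (-φ)) * x (m + 1)
          + e ((((m + 1 : ℕ) : ℝ) + 1) * φ) * e (f (m + 1)) := by ring
      _ = e (((m : ℝ) + 1) * φ) * x (m + 1) + b m := by rw [h1, h2]
  have husum : ∀ m, u m = u 0 + ∑ k ∈ Finset.range m, b k := by
    intro m
    induction m with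
    | zero => simp
    | succ m ih => rw [hu m, ih, Finset.sum_range_succ]; ring
  set T : ℝ := ∑' n : ℕ, |f (n + 1 + 2) - 2 * f (n + 1 + 1) + f (n + 1)| with hTdef
  have hTnonneg : 0 ≤ T := tsum_nonneg fun n => abs_nonneg _
  have hIcoT : ∀ M N : ℕ,
      ∑ k ∈ Finset.Ico M N, |f (k + 1 + 2) - 2 * f (k + 1 + 1) + f (k + 1)| ≤ T :=
    fun M N => Summable.sum_le_tsum _ (fun _ _ => abs_nonneg _) hsum
  have htail : ∀ N, N0 ≤ N → ‖∑ k ∈ Finset.Ico N0 N, b k‖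
      ≤ 2 * δ⁻¹ + 13 * T / (δ * δ) := by
    intro N hN
    have e1 : ∑ k ∈ Finset.Ico N0 N, b k
        = ∑ k ∈ Finset.Ico N0 N, (b (k + 1) - b k) * a k :=
      Finset.sum_congr rfl fun k hk => hb_eq k (Finset.mem_Ico.mp hk).1
    have e2 : ∑ k ∈ Finset.Ico N0 N, (b (k + 1) - b k) * a k
        = (b N * a N - b N0 * a N0)
          - ∑ k ∈ Finset.Ico N0 N, b (k + 1) * (a (k + 1) - a k) := by
      rw [eq_sub_iff_add_eq, ← Finset.sum_add_distrib,
        ← telescope (fun k => b k * a k) hN]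
      exact Finset.sum_congr rfl fun k _ => by ring
    rw [e1, e2]
    have hbound1 : ‖b N * a N - b N0 * a N0‖ ≤ 2 * δ⁻¹ := by
      calc ‖b N * a N - b N0 * a N0‖
          ≤ ‖b N * a N‖ + ‖b N0 * a N0‖ :=
            norm_sub_le _ _
        _ = ‖a N‖ + ‖a N0‖ := by
            rw [norm_mul, norm_mul, hbabs, hbabs, one_mul, one_mul]
        _ ≤ δ⁻¹ + δ⁻¹ := add_le_add (habs_a N hN) (habs_a N0 le_rfl)
        _ = 2 * δ⁻¹ := by ring
    have hbound2 : ‖∑ k ∈ Finset.Ico N0 N, b (k + 1) * (a (k + 1) - a k)‖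
        ≤ 13 * T / (δ * δ) := by
      calc ‖∑ k ∈ Finset.Ico N0 N, b (k + 1) * (a (k + 1) - a k)‖
          ≤ ∑ k ∈ Finset.Ico N0 N, ‖b (k + 1) * (a (k + 1) - a k)‖ :=
            norm_sum_le _ _
        _ ≤ ∑ k ∈ Finset.Ico N0 N,
            (13 * |f (k + 1 + 2) - 2 * f (k + 1 + 1) + f (k + 1)| / (δ * δ)) := by
            apply Finset.sum_le_sum
            intro k hk
            rw [norm_mul, hbabs, one_mul]
            exact ha_diff k (Finset.mem_Ico.mp hk).1
        _ = (13 / (δ * δ))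
            * ∑ k ∈ Finset.Ico N0 N, |f (k + 1 + 2) - 2 * f (k + 1 + 1) + f (k + 1)| := by
            rw [Finset.mul_sum]
            exact Finset.sum_congr rfl fun k _ => by ring
        _ ≤ (13 / (δ * δ)) * T :=
            mul_le_mul_of_nonneg_left (hIcoT N0 N) (by positivity)
        _ = 13 * T / (δ * δ) := by ring
    calc ‖(b N * a N - b N0 * a N0)
            - ∑ k ∈ Finset.Ico N0 N, b (k + 1) * (a (k + 1) - a k)‖
        ≤ ‖b N * a N - b N0 * a N0‖
          + ‖∑ k ∈ Finset.Ico N0 N, b (k + 1) * (a (k + 1) - a k)‖ :=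
          norm_sub_le _ _
      _ ≤ 2 * δ⁻¹ + 13 * T / (δ * δ) := add_le_add hbound1 hbound2
  set C : ℝ := (N0 : ℝ) + (2 * δ⁻¹ + 13 * T / (δ * δ)) with hCdef
  have hC0 : 0 ≤ 2 * δ⁻¹ + 13 * T / (δ * δ) := by positivity
  have hrange : ∀ N, ‖∑ k ∈ Finset.range N, b k‖ ≤ C := by
    intro N
    by_cases hN : N ≤ N0
    · calc ‖∑ k ∈ Finset.range N, b k‖
          ≤ ∑ k ∈ Finset.range N, ‖b k‖ := norm_sum_le _ _
        _ = N := by simp [hbabs]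
        _ ≤ (N0 : ℝ) := by exact_mod_cast hN
        _ ≤ C := by rw [hCdef]; linarith
    · push_neg at hN
      rw [← Finset.sum_range_add_sum_Ico b hN.le]
      calc ‖∑ k ∈ Finset.range N0, b k + ∑ k ∈ Finset.Ico N0 N, b k‖
          ≤ ‖∑ k ∈ Finset.range N0, b k‖
            + ‖∑ k ∈ Finset.Ico N0 N, b k‖ := norm_add_le _ _
        _ ≤ (N0 : ℝ) + (2 * δ⁻¹ + 13 * T / (δ * δ)) := by
            apply add_le_add _ (htail N hN.le)
            calc ‖∑ k ∈ Finset.range N0, b k‖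
                ≤ ∑ k ∈ Finset.range N0, ‖b k‖ := norm_sum_le _ _
              _ = N0 := by simp [hbabs]
        _ = C := hCdef.symm
  refine ⟨‖u 0‖ + C, ?_⟩
  intro n hn
  obtain ⟨m, rfl⟩ : ∃ m, n = m + 1 := ⟨n - 1, by omega⟩
  have hxu : ‖x (m + 1)‖ = ‖u m‖ := by
    show _ = ‖e (((m : ℝ) + 1) * φ) * x (m + 1)‖
    rw [norm_mul, e_abs, one_mul]
  rw [hxu, husum m]
  calc ‖u 0 + ∑ k ∈ Finset.range m, b k‖
      ≤ ‖u 0‖ + ‖∑ k ∈ Finset.range m, b k‖ :=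
        norm_add_le _ _
    _ ≤ ‖u 0‖ + C := add_le_add le_rfl (hrange m)
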